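/- For every real z_max > 0 there exists a natural number M*_min such that for every M ≥ M*_min the following holds: for every z with 0 < z ≤ z_max and every polynomial p of degree at most M+1 satisfying p(0) = 1 and the collocation conditions p'(t_m) = −z·p(t_m) for all m = 0,…,M, where t_m = (1 + τ_m)/2 and τ_m = −cos((2m+1)π/(2M+2)), one has |p(1) − 1/(1+z)| ≤ (1/3)·z/(1+z); equivalently, the contraction factor of the Parareal-CG algorithm satisfies K_CG(z,M) ≤ 1/3 for all z ∈ (0, z_max]. -/

import Mathlib

open Real

namespace Stmt18Aux

open Polynomial

lemma exp_twentieth_le : Real.exp (1/20) ≤ 13141/12500 := by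
  have h := Real.exp_bound (x := 1/20) (by rw [abs_of_nonneg] <;> norm_num) (n := 3) (by norm_num)
  rw [abs_le] at h
  have h2 := h.2
  have : |(1:ℝ)/20| = 1/20 := by rw [abs_of_nonneg]; norm_num
  rw [this] at h2
  simp only [Finset.sum_range_succ, Finset.sum_range_zero, Nat.factorial] at h2
  norm_num at h2
  linarith

lemma pow_le_exp_neg (j : ℕ) : ((12500:ℝ)/13141)^j ≤ Real.exp (-(j/20)) := by
  have h1 : Real.exp (-((j:ℝ)/20)) = (Real.exp (-(1/20)))^j := by
    rw [← Real.exp_nat_mul]; ring_nf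
  rw [h1]
  apply pow_le_pow_left₀ (by norm_num)
  rw [Real.exp_neg, le_inv_comm₀ (by norm_num) (Real.exp_pos _)]
  calc Real.exp (1/20) ≤ 13141/12500 := exp_twentieth_le
    _ = (12500/13141 : ℝ)⁻¹ := by norm_num

lemma exp_key {z : ℝ} (hz : 0 < z) : 1 - (1+z) * Real.exp (-z) ≤ (8/25) * z := by
  rcases le_or_gt (25/8 : ℝ) z with h | h
  · have h1 : (0:ℝ) ≤ (1+z) * Real.exp (-z) := by positivity
    nlinarith
  rcases le_or_gt z (1/2 : ℝ) with h0 | h0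
  · -- small z : exp(-z) ≥ (1 - z/2)^2
    have h1 : (-(z/2)) + 1 ≤ Real.exp (-(z/2)) := Real.add_one_le_exp _
    have h2 : Real.exp (-z) = (Real.exp (-(z/2)))^2 := by
      rw [← Real.exp_nat_mul]; ring_nf
    have h3 : (1 - z/2)^2 ≤ Real.exp (-z) := by
      rw [h2]
      have : (0:ℝ) ≤ 1 - z/2 := by linarith
      nlinarith
    have h4 : (0:ℝ) ≤ z * ((1/2 - z)*(5/2 - z)) := by
      apply mul_nonneg hz.le; apply mul_nonneg <;> linarith
    have h5 := mul_le_mul_of_nonneg_left h3 (show (0:ℝ) ≤ 1+z by linarith)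
    nlinarith [h4, h5, hz.le]
  · -- grid
    set k : ℕ := ⌊20 * z⌋₊ with hk
    have hzn : (0:ℝ) ≤ 20 * z := by linarith
    have hk1 : (k:ℝ) ≤ 20 * z := Nat.floor_le hzn
    have hk2 : 20 * z < (k:ℝ) + 1 := Nat.lt_floor_add_one _
    have hklo : 10 ≤ k := by
      have : (10:ℝ) ≤ 20 * z := by linarith
      exact_mod_cast Nat.le_floor (by exact_mod_cast this)
    have hkhi : k ≤ 62 := by
      have : (k:ℝ) < 63 := by nlinarith
      exact_mod_cast Nat.lt_succ_iff.mp (by exact_mod_cast this)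
    have hexp : ((12500:ℝ)/13141)^(k+1) ≤ Real.exp (-z) := by
      calc ((12500:ℝ)/13141)^(k+1) ≤ Real.exp (-(((k:ℝ)+1)/20)) := by
            have := pow_le_exp_neg (k+1); push_cast at this ⊢; convert this using 3
          _ ≤ Real.exp (-z) := by
            apply Real.exp_le_exp.mpr; linarith
    have hza : (k:ℝ)/20 ≤ z := by linarith
    have key : ∀ (a : ℝ), 0 ≤ a → a ≤ z → ((12500:ℝ)/13141)^(k+1) ≤ Real.exp (-z) →
        1 - (1+a) * ((12500:ℝ)/13141)^(k+1) ≤ (8/25) * a → 1 - (1+z) * Real.exp (-z) ≤ (8/25) * z := by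
      intro a ha haz hx hrat
      have hp : (0:ℝ) ≤ ((12500:ℝ)/13141)^(k+1) := by positivity
      nlinarith [Real.exp_pos (-z)]
    apply key ((k:ℝ)/20) (by positivity) hza hexp
    interval_cases k <;> norm_num

-- q with natDegree ≤ n+1 vanishing at n+1 distinct points equals c * nodal polynomial
lemma rep_lemma {n : ℕ} (q : Polynomial ℝ) (hdeg : q.natDegree ≤ n + 1)
    (v : Fin (n+1) → ℝ) (hv : Function.Injective v)
    (hq : ∀ i, q.eval (v i) = 0) :
    q = C (q.coeff (n+1)) * ∏ i, (X - C (v i)) := by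
  set w : Polynomial ℝ := ∏ i, (X - C (v i)) with hw
  have hwmonic : w.Monic := monic_prod_of_monic _ _ fun i _ => monic_X_sub_C _
  have hwdeg : w.natDegree = n + 1 := by
    rw [hw, natDegree_prod_of_monic _ _ fun i _ => monic_X_sub_C _]
    simp [natDegree_X_sub_C]
  set r : Polynomial ℝ := q - C (q.coeff (n+1)) * w with hr
  have hrdeg : r.natDegree ≤ n := by
    rw [Polynomial.natDegree_le_iff_coeff_eq_zero]
    intro N hN
    rcases eq_or_lt_of_le (Nat.succ_le_of_lt hN) with hN1 | hN1
    · rw [hr]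
      simp only [coeff_sub, coeff_C_mul]
      rw [← hN1]
      have : w.coeff (n+1) = 1 := by
        have := hwmonic.leadingCoeff
        rwa [Polynomial.leadingCoeff, hwdeg] at this
      rw [this, mul_one, sub_self]
    · rw [hr]
      simp only [coeff_sub, coeff_C_mul]
      rw [Polynomial.coeff_eq_zero_of_natDegree_lt (lt_of_le_of_lt hdeg hN1),
        Polynomial.coeff_eq_zero_of_natDegree_lt (p := w) (by rw [hwdeg]; exact hN1)]
      ring
  have hr0 : r = 0 := by
    apply Polynomial.eq_zero_of_natDegree_lt_card_of_eval_eq_zero r hv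
    · intro i
      have hwi : w.eval (v i) = 0 := by
        rw [hw, Polynomial.eval_prod]
        apply Finset.prod_eq_zero (Finset.mem_univ i)
        simp
      simp [hr, hq i, hwi]
    · rw [Fintype.card_fin]
      exact Nat.lt_succ_of_le hrdeg
  exact sub_eq_zero.mp hr0

-- ODE uniqueness
lemma ode_zero {z : ℝ} (hz : z ≠ 0) (s : Polynomial ℝ)
    (h : derivative s + C z * s = 0) : s = 0 := by
  by_contra hs
  have h1 : derivative s = C (-z) * s := by
    rw [map_neg]
    linear_combination h
  have h2 : (C (-z) * s).degree = s.degree := by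
    rw [degree_C_mul (by simpa using hz)]
  have h3 := Polynomial.degree_derivative_lt hs
  rw [h1, h2] at h3
  exact lt_irrefl _ h3

-- particular solution
lemma part_sol {z : ℝ} (hz : z ≠ 0) (w : Polynomial ℝ) {n : ℕ} (hdeg : w.natDegree ≤ n) :
    derivative (∑ k ∈ Finset.range (n+1), C ((-1)^k / z^(k+1)) * derivative^[k] w)
      + C z * (∑ k ∈ Finset.range (n+1), C ((-1)^k / z^(k+1)) * derivative^[k] w) = w := by
  have key : ∀ k : ℕ, C z * (C ((-1)^k / z^(k+1)) * derivative^[k] w)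
      + derivative (C ((-1)^k / z^(k+1)) * derivative^[k] w)
      = C ((-1)^k / z^k) * derivative^[k] w
        - C ((-1)^(k+1) / z^(k+1)) * derivative^[k+1] w := by
    intro k
    rw [derivative_C_mul, Function.iterate_succ_apply']
    have hC : C z * C ((-1:ℝ)^k / z^(k+1)) = C ((-1)^k / z^k) := by
      rw [← map_mul]
      congr 1
      field_simp
      ring
    have hC2 : C ((-1:ℝ)^(k+1) / z^(k+1)) = - C ((-1)^k / z^(k+1)) := by
      rw [← map_neg]
      congr 1
      ring
    rw [← mul_assoc, hC, hC2]
    ring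
  rw [add_comm, Finset.mul_sum, derivative_sum, ← Finset.sum_add_distrib]
  rw [Finset.sum_congr rfl (fun k _ => key k), Finset.sum_range_sub']
  have h0 : C ((-1:ℝ)^0 / z^0) * derivative^[0] w = w := by simp
  have h1 : derivative^[n+1] w = 0 :=
    Polynomial.iterate_derivative_eq_zero (Nat.lt_succ_of_le hdeg)
  rw [h0, h1, mul_zero, sub_zero]

lemma esymm_nonneg (s : Multiset ℝ) (h : ∀ x ∈ s, 0 ≤ x) (j : ℕ) : 0 ≤ s.esymm j := by
  apply Multiset.sum_nonneg
  intro x hx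
  rw [Multiset.mem_map] at hx
  obtain ⟨t, ht, rfl⟩ := hx
  rw [Multiset.mem_powersetCard] at ht
  exact Multiset.prod_nonneg fun a ha => h a (Multiset.mem_of_le ht.1 ha)

lemma esymm_zero' (s : Multiset ℝ) : s.esymm 0 = 1 := by
  simp [Multiset.esymm, Multiset.powersetCard_zero_left]

lemma coeff_nodal {n : ℕ} (v : Fin (n+1) → ℝ) {k : ℕ} (hk : k ≤ n + 1) :
    (∏ i, (X - C (v i))).coeff k
      = (-1)^(n+1-k) * (Finset.univ.val.map v).esymm (n+1-k) := by
  have hprod : (∏ i, (X - C (v i)))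
      = ((Finset.univ.val.map v).map (fun t => X - C t)).prod := by
    rw [Finset.prod, Multiset.map_map]
    rfl
  have hcard : Multiset.card (Finset.univ.val.map v) = n + 1 := by simp
  rw [hprod]
  have := Multiset.prod_X_sub_C_coeff (Finset.univ.val.map v) (k := k) (by rw [hcard]; exact hk)
  rw [this, hcard]

lemma Peval_lower {n : ℕ} {z : ℝ} (hz : 0 < z) (v : Fin (n+1) → ℝ) (hv0 : ∀ i, 0 ≤ v i) :
    (Nat.factorial (n+1) : ℝ) / z^(n+2) ≤
      |(∑ k ∈ Finset.range (n+2), C ((-1)^k / z^(k+1))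
          * derivative^[k] (∏ i, (X - C (v i)))).eval 0| := by
  set w : Polynomial ℝ := ∏ i, (X - C (v i)) with hw
  set ms : Multiset ℝ := Finset.univ.val.map v with hms
  have hmsnn : ∀ x ∈ ms, 0 ≤ x := by
    intro x hx
    rw [hms, Multiset.mem_map] at hx
    obtain ⟨i, _, rfl⟩ := hx
    exact hv0 i
  have heval : ∀ k ∈ Finset.range (n+2),
      (C ((-1:ℝ)^k / z^(k+1)) * derivative^[k] w).eval 0
        = (-1)^(n+1) * (Nat.factorial k * ms.esymm (n+1-k) / z^(k+1)) := by
    intro k hk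
    rw [Finset.mem_range] at hk
    have hk1 : k ≤ n + 1 := Nat.lt_succ_iff.mp hk
    have h1 : (derivative^[k] w).eval 0 = (Nat.factorial k : ℝ) * w.coeff k := by
      rw [← coeff_zero_eq_eval_zero, Polynomial.coeff_iterate_derivative]
      simp [Nat.descFactorial_self]
    rw [eval_mul, eval_C, h1, hw, coeff_nodal v hk1]
    rw [show ((-1:ℝ)^k / z^(k+1)) * (Nat.factorial k * ((-1)^(n+1-k) * ms.esymm (n+1-k)))
        = ((-1)^(n+1-k) * (-1)^k) * (Nat.factorial k * ms.esymm (n+1-k) / z^(k+1)) by ring]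
    rw [← pow_add]
    congr 2
    omega
  rw [eval_finset_sum, Finset.sum_congr rfl heval, ← Finset.mul_sum]
  rw [abs_mul, abs_pow, abs_neg, abs_one, one_pow, one_mul]
  have hnn : ∀ k ∈ Finset.range (n+2), 0 ≤ (Nat.factorial k : ℝ) * ms.esymm (n+1-k) / z^(k+1) := by
    intro k _
    have := esymm_nonneg ms hmsnn (n+1-k)
    positivity
  rw [abs_of_nonneg (Finset.sum_nonneg hnn)]
  have hmem : n + 1 ∈ Finset.range (n+2) := by simp
  calc (Nat.factorial (n+1) : ℝ) / z^(n+2)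
      = (Nat.factorial (n+1) : ℝ) * ms.esymm (n+1-(n+1)) / z^((n+1)+1) := by
        rw [Nat.sub_self, esymm_zero', mul_one]
    _ ≤ _ := Finset.single_le_sum hnn hmem

lemma integral_bound {z c : ℝ} (hz : 0 < z) (p w : Polynomial ℝ)
    (hq : derivative p + C z * p = C c * w)
    (hwb : ∀ t ∈ Set.Ioc (0:ℝ) 1, |w.eval t| ≤ 1) :
    |p.eval 1 - Real.exp (-z) * p.eval 0| ≤ |c| := by
  set f' : ℝ → ℝ := fun x => c * (Real.exp (z*x) * w.eval x) with hf'
  have hderiv : ∀ x ∈ Set.uIcc (0:ℝ) 1,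
      HasDerivAt (fun t => Real.exp (z*t) * p.eval t) (f' x) x := by
    intro x _
    have h1 : HasDerivAt (fun t : ℝ => Real.exp (z*t)) (Real.exp (z*x) * z) x := by
      have := ((hasDerivAt_id x).const_mul z).exp
      simpa using this
    have h2 : HasDerivAt (fun t : ℝ => p.eval t) (p.derivative.eval x) x :=
      p.hasDerivAt x
    have h3 := h1.mul h2
    refine h3.congr_deriv (Eq.symm ?_)
    have hqx : (derivative p).eval x + z * p.eval x = c * w.eval x := by
      have := congrArg (fun r => Polynomial.eval x r) hq
      simpa using this
    rw [hf']
    simp only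
    linear_combination (-(Real.exp (z*x))) * hqx
  have hcont : Continuous f' := by
    apply continuous_const.mul
    exact ((Real.continuous_exp.comp (continuous_const.mul continuous_id)).mul
      (Polynomial.continuous w))
  have hFTC := intervalIntegral.integral_eq_sub_of_hasDerivAt hderiv
    (hcont.intervalIntegrable 0 1)
  have hbound : |∫ x in (0:ℝ)..1, f' x| ≤ |c| * Real.exp z := by
    have := intervalIntegral.norm_integral_le_of_norm_le_const
      (C := |c| * Real.exp z) (f := f') (a := 0) (b := 1) ?_
    · simpa using this
    · intro x hx
      rw [Set.uIoc_of_le (by norm_num : (0:ℝ) ≤ 1)] at hx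
      have hx0 : 0 < x := hx.1
      have hx1 : x ≤ 1 := hx.2
      rw [hf']
      simp only [Real.norm_eq_abs, abs_mul]
      have he : |Real.exp (z*x)| ≤ Real.exp z := by
        rw [abs_of_pos (Real.exp_pos _)]
        apply Real.exp_le_exp.mpr
        nlinarith
      have hw := hwb x ⟨hx0, hx1⟩
      calc |c| * (|Real.exp (z*x)| * |w.eval x|)
          ≤ |c| * (Real.exp z * 1) := by
            apply mul_le_mul_of_nonneg_left _ (abs_nonneg c)
            exact mul_le_mul he hw (abs_nonneg _) (Real.exp_pos _).le
        _ = |c| * Real.exp z := by ring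
  rw [hFTC] at hbound
  simp only [mul_zero, Real.exp_zero, one_mul, mul_one] at hbound
  have hkey : |p.eval 1 - Real.exp (-z) * p.eval 0|
      = Real.exp (-z) * |Real.exp z * p.eval 1 - p.eval 0| := by
    rw [show p.eval 1 - Real.exp (-z) * p.eval 0
        = Real.exp (-z) * (Real.exp z * p.eval 1 - p.eval 0) from by
      rw [mul_sub, ← mul_assoc, ← Real.exp_add]; simp]
    rw [abs_mul, abs_of_pos (Real.exp_pos _)]
  rw [hkey]
  calc Real.exp (-z) * |Real.exp z * p.eval 1 - p.eval 0|
      ≤ Real.exp (-z) * (|c| * Real.exp z) :=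
        mul_le_mul_of_nonneg_left hbound (Real.exp_pos _).le
    _ = |c| := by
        rw [← mul_assoc, mul_comm (Real.exp (-z)), mul_assoc, ← Real.exp_add]
        simp

end Stmt18Aux

open Stmt18Aux Polynomial in
theorem stmt_18 (zmax : ℝ) (hzmax : 0 < zmax) :
    ∃ Mmin : ℕ, ∀ M : ℕ, Mmin ≤ M →
      ∀ z : ℝ, 0 < z → z ≤ zmax →
        ∀ p : Polynomial ℝ, p.degree ≤ M + 1 → p.eval 0 = 1 →
          (∀ m : ℕ, m ≤ M →
            (Polynomial.derivative p).eval
                ((1 + -Real.cos ((2 * m + 1) * π / (2 * M + 2))) / 2)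
              = -z * p.eval ((1 + -Real.cos ((2 * m + 1) * π / (2 * M + 2))) / 2)) →
          |p.eval 1 - 1 / (1 + z)| ≤ 1 / 3 * (z / (1 + z)) := by
  have heps : (0:ℝ) < 1/(75*(1+zmax)) := by positivity
  have h1 : ∀ᶠ n in Filter.atTop, zmax ^ n / (Nat.factorial n : ℝ) < 1/(75*(1+zmax)) :=
    (FloorSemiring.tendsto_pow_div_factorial_atTop zmax).eventually_lt_const heps
  obtain ⟨N, hN⟩ := Filter.eventually_atTop.mp h1
  refine ⟨N, ?_⟩
  intro M hM z hz hzle p hdeg hp0 hcol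
  -- nodes
  set v : Fin (M+1) → ℝ :=
    fun i => (1 + -Real.cos ((2 * (i:ℕ) + 1) * π / (2 * M + 2))) / 2 with hv
  have hθmem : ∀ i : Fin (M+1),
      ((2 * ((i:ℕ):ℝ) + 1) * π / (2 * M + 2)) ∈ Set.Icc 0 π ∧
      0 < ((2 * ((i:ℕ):ℝ) + 1) * π / (2 * M + 2)) ∧
      ((2 * ((i:ℕ):ℝ) + 1) * π / (2 * M + 2)) < π := by
    intro i
    have hiM : ((i:ℕ):ℝ) ≤ M := by exact_mod_cast Nat.lt_succ_iff.mp i.isLt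
    have hipos : (0:ℝ) ≤ ((i:ℕ):ℝ) := Nat.cast_nonneg _
    have hd : (0:ℝ) < 2 * M + 2 := by positivity
    have hpos : 0 < ((2 * ((i:ℕ):ℝ) + 1) * π / (2 * M + 2)) := by
      apply div_pos (by nlinarith [Real.pi_pos]) hd
    have hlt : ((2 * ((i:ℕ):ℝ) + 1) * π / (2 * M + 2)) < π := by
      rw [div_lt_iff₀ hd]
      nlinarith [Real.pi_pos]
    exact ⟨⟨hpos.le, hlt.le⟩, hpos, hlt⟩
  have hv0 : ∀ i, 0 < v i := by
    intro i
    obtain ⟨hmem, hpos, _⟩ := hθmem i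
    have : Real.cos ((2 * ((i:ℕ):ℝ) + 1) * π / (2 * M + 2)) < Real.cos 0 :=
      Real.strictAntiOn_cos ⟨le_rfl, Real.pi_pos.le⟩ hmem hpos
    rw [Real.cos_zero] at this
    rw [hv]
    simp only
    push_cast
    linarith
  have hv1 : ∀ i, v i < 1 := by
    intro i
    obtain ⟨hmem, _, hlt⟩ := hθmem i
    have : Real.cos π < Real.cos ((2 * ((i:ℕ):ℝ) + 1) * π / (2 * M + 2)) :=
      Real.strictAntiOn_cos hmem ⟨Real.pi_pos.le, le_rfl⟩ hlt
    rw [Real.cos_pi] at this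
    rw [hv]
    simp only
    push_cast
    linarith
  have hvmono : StrictMono v := by
    intro i j hij
    have hijR : ((i:ℕ):ℝ) < ((j:ℕ):ℝ) := by exact_mod_cast hij
    have hd : (0:ℝ) < 2 * M + 2 := by positivity
    have hθij : ((2 * ((i:ℕ):ℝ) + 1) * π / (2 * M + 2))
        < ((2 * ((j:ℕ):ℝ) + 1) * π / (2 * M + 2)) := by
      apply div_lt_div_of_pos_right ?_ hd
      nlinarith [Real.pi_pos]
    have := Real.strictAntiOn_cos (hθmem i).1 (hθmem j).1 hθij
    rw [hv]
    simp only
    linarith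
  -- the collocation residual
  set q : Polynomial ℝ := derivative p + C z * p with hqdef
  have hpnd : p.natDegree ≤ M + 1 := by
    apply Polynomial.natDegree_le_iff_degree_le.mpr
    exact_mod_cast hdeg
  have hqnd : q.natDegree ≤ M + 1 := by
    apply (Polynomial.natDegree_add_le _ _).trans
    apply max_le ((Polynomial.natDegree_derivative_le p).trans (by omega))
    exact (Polynomial.natDegree_C_mul_le _ _).trans hpnd
  have hqroots : ∀ i : Fin (M+1), q.eval (v i) = 0 := by
    intro i
    have hi : (i:ℕ) ≤ M := Nat.lt_succ_iff.mp i.isLt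
    have := hcol (i:ℕ) hi
    rw [hqdef]
    simp only [eval_add, eval_mul, eval_C]
    rw [hv]
    simp only
    rw [this]
    ring
  set c : ℝ := q.coeff (M+1) with hc
  set w : Polynomial ℝ := ∏ i, (X - C (v i)) with hw
  have hqw : q = C c * w := rep_lemma q hqnd v hvmono.injective hqroots
  -- the particular solution
  have hwnd : w.natDegree ≤ M + 1 := by
    rw [hw]
    apply (Polynomial.natDegree_prod_le _ _).trans
    apply (Finset.sum_le_card_nsmul _ _ 1 ?_).trans
    · simp
    · intro i _
      exact Polynomial.natDegree_X_sub_C_le _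
  set P : Polynomial ℝ := ∑ k ∈ Finset.range (M+2), C ((-1)^k / z^(k+1)) * derivative^[k] w
    with hP
  have hPsol : derivative P + C z * P = w := part_sol hz.ne' w hwnd
  have hpP : p = C c * P := by
    have hs : derivative (p - C c * P) + C z * (p - C c * P) = 0 := by
      have h1 : derivative (p - C c * P) = derivative p - C c * derivative P := by
        rw [derivative_sub, derivative_mul, derivative_C, zero_mul, zero_add]
      rw [h1]
      have h2 := congrArg (fun r => C c * r) hPsol
      simp only [mul_add] at h2
      rw [← hqw] at *
      rw [hqdef] at *
      ring_nf
      ring_nf at h2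
      linear_combination -h2
    have := ode_zero hz.ne' _ hs
    linear_combination this
  -- value of c
  have hcP0 : c * P.eval 0 = 1 := by
    have := congrArg (fun r => Polynomial.eval 0 r) hpP
    simp only [eval_mul, eval_C] at this
    rw [hp0] at this
    linarith [this]
  have hPlow : (Nat.factorial (M+1) : ℝ) / z^(M+2) ≤ |P.eval 0| := by
    rw [hP, hw]
    exact Peval_lower hz v (fun i => (hv0 i).le)
  have hcabs : |c| ≤ z^(M+2) / (Nat.factorial (M+1) : ℝ) := by
    have hP0ne : |P.eval 0| > 0 := lt_of_lt_of_le (by positivity) hPlow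
    have h1 : |c| * |P.eval 0| = 1 := by
      rw [← abs_mul, hcP0, abs_one]
    have hfac : (0:ℝ) < (Nat.factorial (M+1) : ℝ) := by positivity
    rw [le_div_iff₀ hfac]
    calc |c| * (Nat.factorial (M+1) : ℝ)
        = |c| * |P.eval 0| * ((Nat.factorial (M+1) : ℝ) / |P.eval 0|) := by
          field_simp
        _ = (Nat.factorial (M+1) : ℝ) / |P.eval 0| := by rw [h1, one_mul]
        _ ≤ z^(M+2) := by
          rw [div_le_iff₀ (lt_of_lt_of_le (by positivity) hPlow)]
          calc (Nat.factorial (M+1) : ℝ)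
              = ((Nat.factorial (M+1) : ℝ) / z^(M+2)) * z^(M+2) := by field_simp
            _ ≤ |P.eval 0| * z^(M+2) := by
              apply mul_le_mul_of_nonneg_right hPlow (by positivity)
            _ = z^(M+2) * |P.eval 0| := by ring
  -- integral bound
  have hwb : ∀ t ∈ Set.Ioc (0:ℝ) 1, |w.eval t| ≤ 1 := by
    intro t ht
    rw [hw, Polynomial.eval_prod, Finset.abs_prod]
    apply Finset.prod_le_one
    · intro i _
      exact abs_nonneg _
    · intro i _
      simp only [eval_sub, eval_X, eval_C]
      rw [abs_le]
      constructor
      · nlinarith [hv0 i, hv1 i, ht.1, ht.2]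
      · nlinarith [hv0 i, hv1 i, ht.1, ht.2]
  have hibound : |p.eval 1 - Real.exp (-z) * p.eval 0| ≤ |c| :=
    integral_bound hz p w (by rw [← hqdef, hqw]) hwb
  rw [hp0, mul_one] at hibound
  have h1z : (0:ℝ) < 1+z := by linarith
  have hexple : Real.exp (-z) ≤ 1/(1+z) := by
    have h1 : z + 1 ≤ Real.exp z := Real.add_one_le_exp z
    rw [Real.exp_neg, inv_eq_one_div]
    apply one_div_le_one_div_of_le h1z
    linarith
  have hkey2 : 1/(1+z) - Real.exp (-z) ≤ (8/25) * (z/(1+z)) := by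
    have hek := exp_key hz
    have heq : 1/(1+z) - Real.exp (-z) = (1 - (1+z)*Real.exp (-z))/(1+z) := by
      field_simp
    rw [heq, show (8:ℝ)/25 * (z/(1+z)) = ((8/25)*z)/(1+z) by ring]
    gcongr
  have hcb : |c| ≤ (1/75) * (z/(1+z)) := by
    have h3 : zmax^(M+1) / (Nat.factorial (M+1) : ℝ) < 1/(75*(1+zmax)) := hN (M+1) (by omega)
    have h1zm : (0:ℝ) < 1+zmax := by linarith
    calc |c| ≤ z^(M+2) / (Nat.factorial (M+1):ℝ) := hcabs
      _ = z * (z^(M+1) / (Nat.factorial (M+1):ℝ)) := by ring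
      _ ≤ z * (zmax^(M+1) / (Nat.factorial (M+1):ℝ)) := by
          gcongr

      _ ≤ z * (1/(75*(1+zmax))) := mul_le_mul_of_nonneg_left h3.le hz.le
      _ ≤ z * (1/(75*(1+z))) := by
          have : (1:ℝ)/(75*(1+zmax)) ≤ 1/(75*(1+z)) := by
            apply one_div_le_one_div_of_le (by linarith)
            linarith
          exact mul_le_mul_of_nonneg_left this hz.le
      _ = (1/75) * (z/(1+z)) := by
          field_simp
  have htri : |p.eval 1 - 1/(1+z)| ≤ |p.eval 1 - Real.exp (-z)| + (1/(1+z) - Real.exp (-z)) := by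
    have h4 : |Real.exp (-z) - 1/(1+z)| = 1/(1+z) - Real.exp (-z) := by
      rw [abs_sub_comm, abs_of_nonneg (by linarith)]
    calc |p.eval 1 - 1/(1+z)|
        ≤ |p.eval 1 - Real.exp (-z)| + |Real.exp (-z) - 1/(1+z)| := abs_sub_le _ _ _
      _ = |p.eval 1 - Real.exp (-z)| + (1/(1+z) - Real.exp (-z)) := by rw [h4]
  calc |p.eval 1 - 1/(1+z)|
      ≤ |c| + (1/(1+z) - Real.exp (-z)) := by linarith
    _ ≤ (1/75) * (z/(1+z)) + (8/25) * (z/(1+z)) := add_le_add hcb hkey2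
    _ = 1/3 * (z/(1+z)) := by ring
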